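/- Let A be a finite nonempty type, let τ > 0, let q : A → ℝ, and let π̄ be a probability vector on A. Let Z = ∑_b π̄ b * Real.exp (q b / τ) and define g : A → ℝ by g a = π̄ a * Real.exp (q a / τ) / Z. If π is a probability vector on A whose support is contained in the support of π̄ and ∑_a π a * q a − τ * KL(π‖π̄) = τ * Real.log Z, then π = g. (Uniqueness of the maximizer of the KL-regularized objective: the Gibbs distribution g is the unique optimal policy of the conservative policy optimization problem in the paper's equation (5).) -/
import Mathlib


/-- KL divergence of probability vectors on a finite type, summed over the support of `π`. -/
noncomputable def KL {A : Type*} [Fintype A] (π πbar : A → ℝ) : ℝ :=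
  ∑ a ∈ Finset.univ.filter (fun a => π a ≠ 0), π a * Real.log (π a / πbar a)

/-- Uniqueness of the maximizer of the KL-regularized objective: the Gibbs
distribution is the unique optimal policy of the conservative policy
optimization problem (equation (5) of the paper). -/
theorem stmt_4 {A : Type*} [Fintype A] [Nonempty A] (τ : ℝ) (hτ : 0 < τ) (q : A → ℝ)
    (πbar : A → ℝ) (hbpos : ∀ a, 0 ≤ πbar a) (hbsum : ∑ a, πbar a = 1)
    (Z : ℝ) (hZ : Z = ∑ b, πbar b * Real.exp (q b / τ))
    (g : A → ℝ) (hg : ∀ a, g a = πbar a * Real.exp (q a / τ) / Z)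
    (π : A → ℝ) (hpos : ∀ a, 0 ≤ π a) (hsum : ∑ a, π a = 1)
    (hsupp : ∀ a, πbar a = 0 → π a = 0)
    (hopt : (∑ a, π a * q a) - τ * KL π πbar = τ * Real.log Z) :
    π = g := by
  classical
  set S : Finset A := Finset.univ.filter (fun a => π a ≠ 0) with hS
  -- Z > 0
  have hZpos : 0 < Z := by
    have hex : ∃ a : A, πbar a ≠ 0 := by
      by_contra h
      push_neg at h
      simp [h] at hbsum
    obtain ⟨a0, ha0⟩ := hex
    rw [hZ]
    apply Finset.sum_pos' (fun b _ => mul_nonneg (hbpos b) (Real.exp_pos _).le)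
    exact ⟨a0, Finset.mem_univ _, mul_pos ((hbpos a0).lt_of_ne (Ne.symm ha0))
      (Real.exp_pos _)⟩
  -- sum of g = 1
  have hgsum : ∑ a, g a = 1 := by
    simp only [hg, ← Finset.sum_div, ← hZ]
    exact div_self hZpos.ne'
  have hgnn : ∀ a, 0 ≤ g a := fun a => by
    rw [hg]
    exact div_nonneg (mul_nonneg (hbpos a) (Real.exp_pos _).le) hZpos.le
  -- positivity on support
  have hπpos : ∀ a ∈ S, 0 < π a := by
    intro a ha
    simp only [hS, Finset.mem_filter] at ha
    exact (hpos a).lt_of_ne (Ne.symm ha.2)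
  have hbposS : ∀ a ∈ S, 0 < πbar a := by
    intro a ha
    simp only [hS, Finset.mem_filter] at ha
    refine (hbpos a).lt_of_ne fun h => ha.2 (hsupp a h.symm)
  have hgposS : ∀ a ∈ S, 0 < g a := fun a ha => by
    rw [hg]
    exact div_pos (mul_pos (hbposS a ha) (Real.exp_pos _)) hZpos
  -- sums over support equal full sums
  have hsumS : ∑ a ∈ S, π a = 1 := by
    rw [hS, Finset.sum_filter_of_ne (fun a _ h => h), hsum]
  have hsumSq : ∑ a ∈ S, π a * q a = ∑ a, π a * q a := by
    rw [hS, Finset.sum_filter_of_ne]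
    intro a _ h hc
    exact h (by simp [hc])
  -- log decomposition on support
  have hlog : ∀ a ∈ S, Real.log (π a / g a)
      = Real.log (π a / πbar a) - q a / τ + Real.log Z := by
    intro a ha
    have h1 : π a / g a = (π a / πbar a) * (Z / Real.exp (q a / τ)) := by
      rw [hg]
      field_simp
    rw [h1, Real.log_mul (div_pos (hπpos a ha) (hbposS a ha)).ne'
        (div_pos hZpos (Real.exp_pos _)).ne',
      Real.log_div hZpos.ne' (Real.exp_pos _).ne', Real.log_exp]
    ring
  -- KL(π‖g) = 0
  have hKLg : ∑ a ∈ S, π a * Real.log (π a / g a) = 0 := by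
    have : ∑ a ∈ S, π a * Real.log (π a / g a)
        = (∑ a ∈ S, π a * Real.log (π a / πbar a))
          - (∑ a ∈ S, π a * q a) / τ + (∑ a ∈ S, π a) * Real.log Z := by
      rw [Finset.sum_div, ← Finset.sum_sub_distrib, Finset.sum_mul,
        ← Finset.sum_add_distrib]
      refine Finset.sum_congr rfl fun a ha => ?_
      rw [hlog a ha]
      ring
    have hq : ∑ a, π a * q a = τ * KL π πbar + τ * Real.log Z := by linarith
    have hKL : ∑ a ∈ S, π a * Real.log (π a / πbar a) = KL π πbar := rfl
    rw [this, hsumS, hsumSq, hKL, hq]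
    field_simp
    ring
  -- termwise lower bound
  have hterm : ∀ a ∈ S, π a - g a ≤ π a * Real.log (π a / g a) := by
    intro a ha
    have h1 := Real.log_le_sub_one_of_pos (div_pos (hgposS a ha) (hπpos a ha))
    have h2 : Real.log (π a / g a) = - Real.log (g a / π a) := by
      rw [Real.log_div (hπpos a ha).ne' (hgposS a ha).ne',
        Real.log_div (hgposS a ha).ne' (hπpos a ha).ne']
      ring
    rw [h2]
    have hπ := hπpos a ha
    have : g a / π a - 1 = (g a - π a) / π a := by field_simp
    rw [this, le_div_iff₀ hπ] at h1
    nlinarith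
  -- sum of lower bounds is nonneg
  have hlbsum : ∑ a ∈ S, (π a - g a) = 1 - ∑ a ∈ S, g a := by
    rw [Finset.sum_sub_distrib, hsumS]
  have hgS_le : ∑ a ∈ S, g a ≤ ∑ a, g a :=
    Finset.sum_le_sum_of_subset_of_nonneg (Finset.subset_univ S)
      (fun a _ _ => hgnn a)
  have hlbnn : 0 ≤ ∑ a ∈ S, (π a - g a) := by
    rw [hlbsum]; linarith [hgS_le, hgsum]
  -- difference sum is zero, each term nonneg
  have hdiff : ∑ a ∈ S, (π a * Real.log (π a / g a) - (π a - g a)) = 0 := by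
    rw [Finset.sum_sub_distrib, hKLg]
    have hle : ∑ a ∈ S, (π a - g a) ≤ ∑ a ∈ S, π a * Real.log (π a / g a) :=
      Finset.sum_le_sum hterm
    rw [hKLg] at hle
    linarith
  have heach : ∀ a ∈ S, π a * Real.log (π a / g a) - (π a - g a) = 0 := by
    intro a ha
    have := (Finset.sum_eq_zero_iff_of_nonneg
      (fun a ha => sub_nonneg.mpr (hterm a ha))).mp hdiff
    exact this a ha
  -- equal on support
  have heq : ∀ a ∈ S, π a = g a := by
    intro a ha
    by_contra hne
    have hπ := hπpos a ha
    have hgp := hgposS a ha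
    have hne1 : g a / π a ≠ 1 := by
      rw [Ne, div_eq_one_iff_eq hπ.ne']
      exact fun h => hne h.symm
    have h1 := Real.log_lt_sub_one_of_pos (div_pos hgp hπ) hne1
    have h2 : Real.log (π a / g a) = - Real.log (g a / π a) := by
      rw [Real.log_div hπ.ne' hgp.ne', Real.log_div hgp.ne' hπ.ne']
      ring
    have h3 := heach a ha
    rw [h2] at h3
    have : g a / π a - 1 = (g a - π a) / π a := by field_simp
    rw [this, lt_div_iff₀ hπ] at h1
    nlinarith
  -- g vanishes off support
  have hgS : ∑ a ∈ S, g a = 1 := by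
    have h0 : ∑ a ∈ S, (π a - g a) = 0 := by
      have := Finset.sum_le_sum hterm
      rw [hKLg] at this
      linarith
    rw [hlbsum] at h0
    linarith
  have hgoff : ∀ a ∉ S, g a = 0 := by
    intro a ha
    have hsplit : ∑ a ∈ S, g a + ∑ a ∈ Sᶜ, g a = ∑ a, g a := by
      rw [Finset.sum_add_sum_compl]
    rw [hgS, hgsum] at hsplit
    have hc : ∑ a ∈ Sᶜ, g a = 0 := by linarith
    have := (Finset.sum_eq_zero_iff_of_nonneg (fun a _ => hgnn a)).mp hc
    exact this a (Finset.mem_compl.mpr ha)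
  funext a
  by_cases ha : a ∈ S
  · exact heq a ha
  · have : π a = 0 := by
      by_contra h
      exact ha (by simp [hS, h])
    rw [this, hgoff a ha]
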